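/- Absorption time of the neutral Moran process (r = 1): Let n ≥ 2 and let (Y_t)_{t∈ℕ} be the Markov chain on {0, 1, …, n} started at Y_0 = n − 1 in which, for each interior state k ∈ {1, …, n−1}, setting p(k) = (k/n)·((n − k)/n), the chain moves from k to k + 1 with probability p(k), from k to k − 1 with probability p(k), and stays at k otherwise, while the states 0 and n are absorbing. Let T = inf{t ∈ ℕ : Y_t ∈ {0, n}}. Then E[T] ≤ n²/2. -/

import Mathlib

set_option autoImplicit false

open MeasureTheory ProbabilityTheory

/-- The first-hitting time of the time-dependent predicate `P` (valued in `ℝ≥0∞`,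
so that it is `∞` when `P` is never satisfied). -/
noncomputable def hitTime {Ω : Type*} (P : ℕ → Ω → Prop) (ω : Ω) : ENNReal :=
  sInf {t : ENNReal | ∃ n : ℕ, t = n ∧ P n ω}

/-- The one-step transition probability of the neutral Moran process (`r = 1`) on `n`
individuals at `k` non-mutants: `p(k) = (k/n)·((n − k)/n)`. -/
noncomputable def neutralMoranP (n k : ℕ) : ℝ :=
  ((k : ℝ) / (n : ℝ)) * (((n : ℝ) - (k : ℝ)) / (n : ℝ))

/-- `Y` is (a copy of) the neutral Moran chain on `n` individuals: conditional on any
positive-probability history, from an interior state `k` the chain moves up by one with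
probability `p(k) = k(n−k)/n²`, down by one with probability `p(k)`, and stays otherwise;
the states `0` and `n` are absorbing. -/
def IsNeutralMoranChain {Ω : Type} [MeasurableSpace Ω] (μ : Measure Ω)
    (n : ℕ) (Y : ℕ → Ω → ℕ) : Prop :=
  (∀ t, Measurable (Y t)) ∧ (∀ t ω, Y t ω ≤ n) ∧
  ∀ t : ℕ, ∀ h : ℕ → ℕ, μ {ω | ∀ i ≤ t, Y i ω = h i} ≠ 0 →
    ((0 < h t → h t < n →
      (ProbabilityTheory.cond μ {ω | ∀ i ≤ t, Y i ω = h i}) {ω | Y (t + 1) ω = h t + 1}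
          = ENNReal.ofReal (neutralMoranP n (h t)) ∧
      (ProbabilityTheory.cond μ {ω | ∀ i ≤ t, Y i ω = h i}) {ω | Y (t + 1) ω = h t - 1}
          = ENNReal.ofReal (neutralMoranP n (h t)) ∧
      (ProbabilityTheory.cond μ {ω | ∀ i ≤ t, Y i ω = h i}) {ω | Y (t + 1) ω = h t}
          = ENNReal.ofReal (1 - 2 * neutralMoranP n (h t))) ∧
    ((h t = 0 ∨ h t = n) →
      (ProbabilityTheory.cond μ {ω | ∀ i ≤ t, Y i ω = h i}) {ω | Y (t + 1) ω = h t} = 1))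


noncomputable def moranPhi (n k : ℕ) : ENNReal := ENNReal.ofReal ((k:ℝ) * ((n:ℝ) - (k:ℝ)))

noncomputable def moranC (n : ℕ) : ENNReal := ENNReal.ofReal (1 - 2/(n:ℝ)^2)

lemma lintegral_comp_nat_bounded {Ω : Type} [MeasurableSpace Ω] (μ : Measure Ω)
    (g : Ω → ℕ) (hg : Measurable g) (n : ℕ) (hb : ∀ ω, g ω ≤ n)
    (f : ℕ → ENNReal) (A : Set Ω) :
    ∫⁻ ω in A, f (g ω) ∂μ = ∑ j ∈ Finset.range (n+1), f j * μ (A ∩ g ⁻¹' {j}) := by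
  have hpt : ∀ ω, f (g ω)
      = ∑ j ∈ Finset.range (n+1), (g ⁻¹' {j}).indicator (fun _ => f j) ω := by
    intro ω
    have : ∀ j, (g ⁻¹' {j}).indicator (fun _ => f j) ω = if j = g ω then f j else 0 := by
      intro j
      simp [Set.indicator, Set.mem_preimage, eq_comm]
    simp only [this, Finset.sum_ite_eq' (Finset.range (n+1)) (g ω) f]
    simp [Nat.lt_succ_iff, hb ω]
  calc ∫⁻ ω in A, f (g ω) ∂μ
      = ∫⁻ ω in A, ∑ j ∈ Finset.range (n+1), (g ⁻¹' {j}).indicator (fun _ => f j) ω ∂μ := by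
        simp only [hpt]
    _ = ∑ j ∈ Finset.range (n+1), ∫⁻ ω in A, (g ⁻¹' {j}).indicator (fun _ => f j) ω ∂μ := by
        refine lintegral_finset_sum' _ fun j _ => ?_
        exact (measurable_const.indicator (hg (measurableSet_singleton j))).aemeasurable
    _ = ∑ j ∈ Finset.range (n+1), f j * μ (A ∩ g ⁻¹' {j}) := by
        refine Finset.sum_congr rfl fun j _ => ?_
        rw [lintegral_indicator (hg (measurableSet_singleton j)), setLIntegral_const,
          Measure.restrict_apply (hg (measurableSet_singleton j)), Set.inter_comm]
        -- goal: f j * μ (g⁻¹'{j} ∩ A) form matching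


lemma cond_to_meas {Ω : Type} [MeasurableSpace Ω] (μ : Measure Ω) [IsProbabilityMeasure μ]
    {A s : Set Ω} (hA : MeasurableSet A) (hμ : μ A ≠ 0) {q : ENNReal}
    (h : ProbabilityTheory.cond μ A s = q) : μ (A ∩ s) = q * μ A := by
  rw [ProbabilityTheory.cond_apply hA] at h
  have hfin : μ A ≠ ⊤ := (measure_ne_top μ A)
  calc μ (A ∩ s) = (μ A * (μ A)⁻¹) * μ (A ∩ s) := by
        rw [ENNReal.mul_inv_cancel hμ hfin, one_mul]
    _ = μ A * ((μ A)⁻¹ * μ (A ∩ s)) := by ring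
    _ = q * μ A := by rw [h]; ring


lemma lintegral_partition {Ω : Type} [MeasurableSpace Ω] (μ : Measure Ω)
    (n : ℕ) (Y : ℕ → Ω → ℕ) (hm : ∀ t, Measurable (Y t)) (hb : ∀ t ω, Y t ω ≤ n)
    (t : ℕ) (g : Ω → ENNReal) :
    ∫⁻ ω, g ω ∂μ = ∑' v : Fin (t+1) → Fin (n+1),
      ∫⁻ ω in {ω | ∀ i ≤ t, Y i ω = (fun i : ℕ => if h : i ≤ t then (v ⟨i, Nat.lt_succ_of_le h⟩ : ℕ) else 0) i}, g ω ∂μ := by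
  set H : (Fin (t+1) → Fin (n+1)) → ℕ → ℕ :=
    fun v i => if h : i ≤ t then (v ⟨i, Nat.lt_succ_of_le h⟩ : ℕ) else 0 with hH
  set A : (Fin (t+1) → Fin (n+1)) → Set Ω := fun v => {ω | ∀ i ≤ t, Y i ω = H v i} with hAdef
  have hAm : ∀ v, MeasurableSet (A v) := by
    intro v
    have : A v = ⋂ i ∈ Finset.range (t+1), (Y i) ⁻¹' {H v i} := by
      ext ω; simp [hAdef, Nat.lt_succ_iff, Set.mem_iInter]
    rw [this]
    exact MeasurableSet.biInter (Finset.range (t+1)).countable_toSet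
      fun i _ => (hm i) (measurableSet_singleton _)
  have hdisj : Pairwise (Function.onFun Disjoint A) := by
    intro v w hvw
    refine Set.disjoint_left.mpr fun ω hv hw => hvw ?_
    funext i
    have h1 := hv i.1 (Nat.lt_succ_iff.mp i.2)
    have h2 := hw i.1 (Nat.lt_succ_iff.mp i.2)
    have : H v i.1 = H w i.1 := h1 ▸ h2 ▸ rfl
    simp only [hH, dif_pos (Nat.lt_succ_iff.mp i.2)] at this
    exact Fin.ext (by simpa using this)
  have hcov : ⋃ v, A v = Set.univ := by
    refine Set.eq_univ_of_forall fun ω => ?_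
    refine Set.mem_iUnion.mpr ⟨fun i => ⟨Y i.1 ω, Nat.lt_succ_of_le (hb i.1 ω)⟩, ?_⟩
    intro i hi
    simp [hH, hi]
  conv_lhs => rw [← setLIntegral_univ, ← hcov]
  exact lintegral_iUnion hAm hdisj g

lemma moranP_nonneg {n k : ℕ} (hk : k ≤ n) : 0 ≤ neutralMoranP n k := by
  unfold neutralMoranP
  have h1 : (0:ℝ) ≤ (k:ℝ) / n := by positivity
  have h2 : (0:ℝ) ≤ ((n:ℝ) - k) / n := by
    apply div_nonneg _ (by positivity)
    have := (Nat.cast_le (α := ℝ)).mpr hk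
    linarith
  exact mul_nonneg h1 h2

lemma moranP_half {n k : ℕ} (hn : 1 ≤ n) (hk : k ≤ n) : 2 * neutralMoranP n k ≤ 1 := by
  unfold neutralMoranP
  have hN : (1:ℝ) ≤ (n:ℝ) := by exact_mod_cast hn
  have hK : (k:ℝ) ≤ (n:ℝ) := by exact_mod_cast hk
  have h0 : (0:ℝ) ≤ (k:ℝ) := Nat.cast_nonneg k
  rw [div_mul_div_comm, mul_div_assoc', div_le_one (by positivity)]
  nlinarith [sq_nonneg ((n:ℝ) - 2*k)]

lemma moran_real_step {n k : ℕ} (hn : 2 ≤ n) (hk0 : 1 ≤ k) (hkn : k + 1 ≤ n) :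
    neutralMoranP n k * (((k:ℝ)+1)*((n:ℝ)-((k:ℝ)+1)))
      + neutralMoranP n k * (((k:ℝ)-1)*((n:ℝ)-((k:ℝ)-1)))
      + (1 - 2*neutralMoranP n k) * ((k:ℝ)*((n:ℝ)-(k:ℝ)))
    = (1 - 2/(n:ℝ)^2) * ((k:ℝ)*((n:ℝ)-(k:ℝ))) := by
  have hN : (n:ℝ) ≠ 0 := by positivity
  unfold neutralMoranP
  field_simp
  ring

lemma step_on_set {Ω : Type} [MeasurableSpace Ω] (μ : Measure Ω) [IsProbabilityMeasure μ]
    (n : ℕ) (hn : 2 ≤ n) (Y : ℕ → Ω → ℕ) (hm : ∀ t, Measurable (Y t)) (hb : ∀ t ω, Y t ω ≤ n)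
    (t : ℕ) (A : Set Ω) (hA : MeasurableSet A) (k : ℕ) (hk : k ≤ n)
    (hint : 0 < k → k < n →
      μ (A ∩ Y (t+1) ⁻¹' {k+1}) = ENNReal.ofReal (neutralMoranP n k) * μ A ∧
      μ (A ∩ Y (t+1) ⁻¹' {k-1}) = ENNReal.ofReal (neutralMoranP n k) * μ A ∧
      μ (A ∩ Y (t+1) ⁻¹' {k}) = ENNReal.ofReal (1 - 2 * neutralMoranP n k) * μ A)
    (habs : (k = 0 ∨ k = n) → μ (A ∩ Y (t+1) ⁻¹' {k}) = μ A) :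
    ∫⁻ ω in A, moranPhi n (Y (t+1) ω) ∂μ = moranC n * moranPhi n k * μ A := by
  have hfin : μ A ≠ ⊤ := measure_ne_top μ A
  have hmeas : ∀ j : ℕ, MeasurableSet (A ∩ Y (t+1) ⁻¹' {j}) :=
    fun j => hA.inter ((hm (t+1)) (measurableSet_singleton j))
  have hNpos : (0:ℝ) < (n:ℝ) := by positivity
  rw [lintegral_comp_nat_bounded μ (Y (t+1)) (hm (t+1)) n (hb (t+1)) (moranPhi n) A]
  -- generic vanishing lemma
  have hcompl : ∀ S : Set Ω, MeasurableSet S → μ (A ∩ S) = μ A →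
      ∀ T : Set Ω, Disjoint T S → μ (A ∩ T) = 0 := by
    intro S hS hfull T hdisj
    have hsub : A ∩ T ⊆ A \ (A ∩ S) := by
      intro ω hω
      exact ⟨hω.1, fun hmem => (Set.disjoint_left.mp hdisj hω.2) hmem.2⟩
    have hdk : μ (A \ (A ∩ S)) = μ A - μ (A ∩ S) :=
      measure_diff Set.inter_subset_left (hA.inter hS).nullMeasurableSet (by finiteness)
    have hle : μ (A ∩ T) ≤ 0 := by
      calc μ (A ∩ T) ≤ μ (A \ (A ∩ S)) := measure_mono hsub
        _ = μ A - μ (A ∩ S) := hdk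
        _ = 0 := by rw [hfull, tsub_self]
    exact le_antisymm hle (zero_le)
  have hpre : ∀ a b : ℕ, a ≠ b → Disjoint (Y (t+1) ⁻¹' {a}) (Y (t+1) ⁻¹' {b}) := by
    intro a b hab
    refine Set.disjoint_left.mpr fun ω h1 h2 => hab ?_
    simp only [Set.mem_preimage, Set.mem_singleton_iff] at h1 h2
    exact h1 ▸ h2 ▸ rfl
  by_cases hcase : k = 0 ∨ k = n
  · -- absorbing
    have hφ : moranPhi n k = 0 := by
      rcases hcase with h | h <;> simp [moranPhi, h]
    rw [hφ, mul_zero, zero_mul]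
    refine Finset.sum_eq_zero fun j hj => ?_
    by_cases hjk : j = k
    · rw [hjk, hφ, zero_mul]
    · rw [hcompl _ ((hm (t+1)) (measurableSet_singleton k)) (habs hcase) _ (hpre j k hjk),
        mul_zero]
  · -- interior
    push_neg at hcase
    have hk0 : 0 < k := Nat.pos_of_ne_zero hcase.1
    have hkn : k < n := lt_of_le_of_ne hk hcase.2
    obtain ⟨hup, hdown, hstay⟩ := hint hk0 hkn
    set p := neutralMoranP n k with hp
    have hp0 : 0 ≤ p := moranP_nonneg hk
    have hp1 : 2 * p ≤ 1 := moranP_half (by omega) hk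
    -- total measure of union of the three events inside A is μ A
    have hU : μ (A ∩ (Y (t+1) ⁻¹' {k+1} ∪ (Y (t+1) ⁻¹' {k-1} ∪ Y (t+1) ⁻¹' {k}))) = μ A := by
      have hd2 : Disjoint (A ∩ Y (t+1) ⁻¹' {k-1}) (A ∩ Y (t+1) ⁻¹' {k}) :=
        Set.disjoint_of_subset Set.inter_subset_right Set.inter_subset_right
          (hpre (k-1) k (by omega))
      have hd1 : Disjoint (A ∩ Y (t+1) ⁻¹' {k+1})
          ((A ∩ Y (t+1) ⁻¹' {k-1}) ∪ (A ∩ Y (t+1) ⁻¹' {k})) :=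
        Set.disjoint_of_subset Set.inter_subset_right
          (Set.union_subset_union Set.inter_subset_right Set.inter_subset_right)
          (Disjoint.union_right (hpre (k+1) (k-1) (by omega)) (hpre (k+1) k (by omega)))
      rw [Set.inter_union_distrib_left, Set.inter_union_distrib_left,
        measure_union hd1 ((hmeas (k-1)).union (hmeas k)),
        measure_union hd2 (hmeas k),
        hup, hdown, hstay, ← add_mul, ← ENNReal.ofReal_add hp0 (by linarith : (0:ℝ) ≤ 1 - 2*p), ← add_mul,
        ← ENNReal.ofReal_add hp0 (by linarith : (0:ℝ) ≤ p + (1 - 2*p))]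
      have h1 : p + (p + (1 - 2*p)) = 1 := by ring
      rw [h1, ENNReal.ofReal_one, one_mul]
    have hvanish : ∀ j : ℕ, j ≠ k-1 → j ≠ k → j ≠ k+1 → μ (A ∩ Y (t+1) ⁻¹' {j}) = 0 := by
      intro j h1 h2 h3
      refine hcompl _ ?_ hU _ ?_
      · exact (((hm (t+1)) (measurableSet_singleton (k+1))).union
          (((hm (t+1)) (measurableSet_singleton (k-1))).union
            ((hm (t+1)) (measurableSet_singleton k))))
      · exact Disjoint.union_right (hpre j (k+1) h3)
          (Disjoint.union_right (hpre j (k-1) h1) (hpre j k h2))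
    -- reduce the sum to three terms
    have hsubset : ({k-1, k, k+1} : Finset ℕ) ⊆ Finset.range (n+1) := by
      intro x hx
      simp only [Finset.mem_insert, Finset.mem_singleton] at hx
      rcases hx with h | h | h <;> simp [Finset.mem_range] <;> omega
    rw [← Finset.sum_subset hsubset (by
      intro x hx hxn
      simp only [Finset.mem_insert, Finset.mem_singleton, not_or] at hxn
      rw [hvanish x hxn.1 hxn.2.1 hxn.2.2, mul_zero])]
    have hne1 : (k-1 : ℕ) ∉ ({k, k+1} : Finset ℕ) := by simp; omega
    have hne2 : (k : ℕ) ∉ ({k+1} : Finset ℕ) := by simp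
    rw [Finset.sum_insert hne1, Finset.sum_insert hne2, Finset.sum_singleton,
      hdown, hstay, hup]
    -- now pure ENNReal/real algebra
    have hK1 : (1:ℝ) ≤ (k:ℝ) := by exact_mod_cast hk0
    have hKN : (k:ℝ) + 1 ≤ (n:ℝ) := by exact_mod_cast hkn
    have hcast1 : ((k-1 : ℕ) : ℝ) = (k:ℝ) - 1 := by
      rw [Nat.cast_sub hk0]; norm_num
    have hxm : (0:ℝ) ≤ ((k:ℝ)-1) * ((n:ℝ) - ((k:ℝ)-1)) := by nlinarith
    have hx0 : (0:ℝ) ≤ (k:ℝ) * ((n:ℝ) - (k:ℝ)) := by nlinarith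
    have hxp : (0:ℝ) ≤ ((k:ℝ)+1) * ((n:ℝ) - ((k:ℝ)+1)) := by nlinarith
    have hc0 : (0:ℝ) ≤ 1 - 2/(n:ℝ)^2 := by
      have : (2:ℝ) ≤ (n:ℝ) := by exact_mod_cast hn
      have h4 : (4:ℝ) ≤ (n:ℝ)^2 := by nlinarith
      have : 2/(n:ℝ)^2 ≤ 2/4 := by
        apply div_le_div_of_nonneg_left (by norm_num) (by norm_num) h4
      linarith
    simp only [moranPhi, moranC, hcast1, Nat.cast_add, Nat.cast_one]
    rw [← mul_assoc, ← mul_assoc, ← mul_assoc,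
      ← ENNReal.ofReal_mul hxm, ← ENNReal.ofReal_mul hx0, ← ENNReal.ofReal_mul hxp,
      ← ENNReal.ofReal_mul hc0, ← add_mul, ← add_mul,
      ← ENNReal.ofReal_add (mul_nonneg hx0 (by linarith)) (mul_nonneg hxp hp0),
      ← ENNReal.ofReal_add (mul_nonneg hxm hp0)
        (add_nonneg (mul_nonneg hx0 (by linarith)) (mul_nonneg hxp hp0))]
    congr 1
    have hN : (n:ℝ) ≠ 0 := by positivity
    simp only [hp, neutralMoranP]
    field_simp
    ring


lemma historySet_measurable {Ω : Type} [MeasurableSpace Ω] (Y : ℕ → Ω → ℕ)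
    (hm : ∀ t, Measurable (Y t)) (t : ℕ) (h : ℕ → ℕ) :
    MeasurableSet {ω | ∀ i ≤ t, Y i ω = h i} := by
  have : {ω | ∀ i ≤ t, Y i ω = h i} = ⋂ i ∈ Finset.range (t+1), (Y i) ⁻¹' {h i} := by
    ext ω; simp [Nat.lt_succ_iff]
  rw [this]
  exact MeasurableSet.biInter (Finset.range (t+1)).countable_toSet
    fun i _ => (hm i) (measurableSet_singleton _)

lemma moran_F_step {Ω : Type} [MeasurableSpace Ω] (μ : Measure Ω) [IsProbabilityMeasure μ]
    (n : ℕ) (hn : 2 ≤ n) (Y : ℕ → Ω → ℕ) (hY : IsNeutralMoranChain μ n Y) (t : ℕ) :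
    ∫⁻ ω, moranPhi n (Y (t+1) ω) ∂μ = moranC n * ∫⁻ ω, moranPhi n (Y t ω) ∂μ := by
  obtain ⟨hm, hb, hc⟩ := hY
  rw [lintegral_partition μ n Y hm hb t (fun ω => moranPhi n (Y (t+1) ω)),
      lintegral_partition μ n Y hm hb t (fun ω => moranPhi n (Y t ω)),
      ← ENNReal.tsum_mul_left]
  refine tsum_congr fun v => ?_
  set H : ℕ → ℕ := fun i : ℕ => if h : i ≤ t then (v ⟨i, Nat.lt_succ_of_le h⟩ : ℕ) else 0 with hH
  set A : Set Ω := {ω | ∀ i ≤ t, Y i ω = H i} with hAdef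
  have hA : MeasurableSet A := historySet_measurable Y hm t H
  by_cases hμA : μ A = 0
  · rw [setLIntegral_measure_zero _ _ hμA, setLIntegral_measure_zero _ _ hμA, mul_zero]
  · set k : ℕ := H t with hkdef
    have hk : k ≤ n := by
      rw [hkdef, hH]
      simp only [le_refl, dif_pos]
      exact Nat.lt_succ_iff.mp (v ⟨t, Nat.lt_succ_of_le le_rfl⟩).2
    have hYt : ∀ ω ∈ A, Y t ω = k := fun ω hω => hω t le_rfl
    obtain ⟨hint, habs⟩ := hc t H hμA
    have hRHS : ∫⁻ ω in A, moranPhi n (Y t ω) ∂μ = moranPhi n k * μ A := by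
      rw [setLIntegral_congr_fun hA
        (show Set.EqOn (fun ω => moranPhi n (Y t ω)) (fun _ => moranPhi n k) A from fun ω hω => by simp only [hYt ω hω]),
        setLIntegral_const]
    have hLHS : ∫⁻ ω in A, moranPhi n (Y (t+1) ω) ∂μ = moranC n * moranPhi n k * μ A := by
      refine step_on_set μ n hn Y hm hb t A hA k hk (fun h1 h2 => ?_) (fun hor => ?_)
      · obtain ⟨c1, c2, c3⟩ := hint h1 h2
        exact ⟨cond_to_meas μ hA hμA c1, cond_to_meas μ hA hμA c2, cond_to_meas μ hA hμA c3⟩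
      · have := cond_to_meas μ hA hμA (habs hor)
        rwa [one_mul] at this
    rw [hLHS, hRHS, mul_assoc]

/-- **Absorption time of the neutral Moran process (`r = 1`).**
Started at `n − 1`, the expected first-hitting time of `{0, n}` is at most `n²/2`. -/
theorem neutral_moran_absorption_time
    (n : ℕ) (hn : 2 ≤ n)
    {Ω : Type} [MeasurableSpace Ω] (μ : Measure Ω) [IsProbabilityMeasure μ]
    (Y : ℕ → Ω → ℕ) (hY : IsNeutralMoranChain μ n Y) (hY0 : ∀ ω, Y 0 ω = n - 1) :
    ∫⁻ ω, hitTime (fun t ω => Y t ω = 0 ∨ Y t ω = n) ω ∂μ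
      ≤ ENNReal.ofReal ((n : ℝ) ^ 2 / 2) := by
  have hm := hY.1
  have hb := hY.2.1
  have hN2 : (2:ℝ) ≤ (n:ℝ) := by exact_mod_cast hn
  have hNpos : (0:ℝ) < (n:ℝ) := by linarith
  set c := moranC n with hc
  -- value of F at 0
  have hF0 : ∫⁻ ω, moranPhi n (Y 0 ω) ∂μ = ENNReal.ofReal ((n:ℝ) - 1) := by
    have hcast : ((n - 1 : ℕ) : ℝ) = (n:ℝ) - 1 := by
      rw [Nat.cast_sub (by omega)]; norm_num
    simp only [hY0, moranPhi, hcast]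
    rw [lintegral_const, measure_univ, mul_one]
    congr 1
    ring
  have hF : ∀ t, ∫⁻ ω, moranPhi n (Y t ω) ∂μ = c ^ t * ENNReal.ofReal ((n:ℝ) - 1) := by
    intro t
    induction t with
    | zero => simpa using hF0
    | succ t ih =>
      rw [moran_F_step μ n hn Y hY t, ih, ← mul_assoc, ← pow_succ']
  -- tail sets
  set B : ℕ → Set Ω := fun t => {ω | ∀ s ≤ t, ¬(Y s ω = 0 ∨ Y s ω = n)} with hBdef
  have hBmeas : ∀ t, MeasurableSet (B t) := by
    intro t
    have : B t = ⋂ s ∈ Finset.range (t+1), ((Y s ⁻¹' {0}) ∪ (Y s ⁻¹' {n}))ᶜ := by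
      ext ω
      simp [hBdef, Nat.lt_succ_iff, not_or]
    rw [this]
    exact MeasurableSet.biInter (Finset.range (t+1)).countable_toSet fun s _ =>
      (((hm s) (measurableSet_singleton 0)).union ((hm s) (measurableSet_singleton n))).compl
  -- Markov-type bound
  have hKpos : ENNReal.ofReal ((n:ℝ) - 1) ≠ 0 := by
    rw [← ENNReal.ofReal_zero, Ne, ENNReal.ofReal_eq_ofReal_iff (by linarith) le_rfl]
    · linarith
  have hBle : ∀ t, μ (B t) ≤ c ^ t := by
    intro t
    have hsub : B t ⊆ {ω | ENNReal.ofReal ((n:ℝ) - 1) ≤ moranPhi n (Y t ω)} := by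
      intro ω hω
      have h1 := hω t le_rfl
      push_neg at h1
      have hk1 : 1 ≤ Y t ω := Nat.one_le_iff_ne_zero.mpr h1.1
      have hk2 : Y t ω < n := lt_of_le_of_ne (hb t ω) h1.2
      have hK1 : (1:ℝ) ≤ (Y t ω : ℝ) := by exact_mod_cast hk1
      have hK2 : (Y t ω : ℝ) + 1 ≤ (n:ℝ) := by exact_mod_cast hk2
      refine ENNReal.ofReal_le_ofReal ?_
      nlinarith
    have hmarkov := mul_meas_ge_le_lintegral₀
      (μ := μ) (f := fun ω => moranPhi n (Y t ω))
      (by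
        have : Measurable (fun ω => moranPhi n (Y t ω)) :=
          (measurable_from_top (f := moranPhi n)).comp (hm t)
        exact this.aemeasurable)
      (ENNReal.ofReal ((n:ℝ) - 1))
    have hchain : ENNReal.ofReal ((n:ℝ) - 1) * μ (B t)
        ≤ ENNReal.ofReal ((n:ℝ) - 1) * (c ^ t) := by
      calc ENNReal.ofReal ((n:ℝ) - 1) * μ (B t)
          ≤ ENNReal.ofReal ((n:ℝ) - 1) * μ {ω | ENNReal.ofReal ((n:ℝ) - 1) ≤ moranPhi n (Y t ω)} :=
            mul_le_mul_right (measure_mono hsub) _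
        _ ≤ ∫⁻ ω, moranPhi n (Y t ω) ∂μ := hmarkov
        _ = c ^ t * ENNReal.ofReal ((n:ℝ) - 1) := hF t
        _ = ENNReal.ofReal ((n:ℝ) - 1) * c ^ t := mul_comm _ _
    exact (ENNReal.mul_le_mul_iff_right hKpos ENNReal.ofReal_ne_top).mp hchain
  -- pointwise bound on the hitting time
  have hpt : ∀ ω, hitTime (fun t ω => Y t ω = 0 ∨ Y t ω = n) ω
      ≤ ∑' t, (B t).indicator (1 : Ω → ENNReal) ω := by
    intro ω
    by_cases hex : ∃ s : ℕ, (Y s ω = 0 ∨ Y s ω = n)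
    · set m := Nat.find hex with hmdef
      have h1 : hitTime (fun t ω => Y t ω = 0 ∨ Y t ω = n) ω ≤ (m : ENNReal) :=
        sInf_le ⟨m, rfl, Nat.find_spec hex⟩
      have h2 : ∀ t < m, ω ∈ B t := by
        intro t ht s hs habs
        exact Nat.find_min hex (lt_of_le_of_lt hs ht) habs
      calc hitTime (fun t ω => Y t ω = 0 ∨ Y t ω = n) ω ≤ (m : ENNReal) := h1
        _ = ∑ t ∈ Finset.range m, (1:ENNReal) := by simp
        _ = ∑ t ∈ Finset.range m, (B t).indicator (1 : Ω → ENNReal) ω := by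
            refine Finset.sum_congr rfl fun t ht => ?_
            rw [Set.indicator_of_mem (h2 t (Finset.mem_range.mp ht))]
            rfl
        _ ≤ ∑' t, (B t).indicator (1 : Ω → ENNReal) ω := ENNReal.sum_le_tsum _
    · push_neg at hex
      have hmem : ∀ t, ω ∈ B t := fun t s hs => by
        have := hex s
        tauto
      have : ∑' t, (B t).indicator (1 : Ω → ENNReal) ω = ⊤ := by
        have heq : ∀ t : ℕ, (B t).indicator (1 : Ω → ENNReal) ω = 1 := fun t => by
          rw [Set.indicator_of_mem (hmem t)]; rfl
        simp only [heq]
        exact ENNReal.tsum_const_eq_top_of_ne_zero one_ne_zero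
      rw [this]
      exact le_top
  -- put everything together
  have hc1 : (0:ℝ) < 2 / (n:ℝ)^2 := by positivity
  calc ∫⁻ ω, hitTime (fun t ω => Y t ω = 0 ∨ Y t ω = n) ω ∂μ
      ≤ ∫⁻ ω, ∑' t, (B t).indicator (1 : Ω → ENNReal) ω ∂μ := lintegral_mono hpt
    _ = ∑' t, ∫⁻ ω, (B t).indicator (1 : Ω → ENNReal) ω ∂μ :=
        lintegral_tsum fun t => (measurable_one.indicator (hBmeas t)).aemeasurable
    _ = ∑' t, μ (B t) := tsum_congr fun t => lintegral_indicator_one (hBmeas t)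
    _ ≤ ∑' t, c ^ t := ENNReal.tsum_le_tsum hBle
    _ = (1 - c)⁻¹ := ENNReal.tsum_geometric c
    _ = ENNReal.ofReal ((n : ℝ) ^ 2 / 2) := by
        rw [hc]
        unfold moranC
        rw [← ENNReal.ofReal_one, ← ENNReal.ofReal_sub 1 (by
          have h4 : (4:ℝ) ≤ (n:ℝ)^2 := by nlinarith
          have : 2/(n:ℝ)^2 ≤ 2/4 := div_le_div_of_nonneg_left (by norm_num) (by norm_num) h4
          linarith)]
        have h1 : (1:ℝ) - (1 - 2/(n:ℝ)^2) = 2/(n:ℝ)^2 := by ring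
        rw [h1, ← ENNReal.ofReal_inv_of_pos hc1]
        congr 1
        rw [inv_div]
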